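/- arXiv:0908.1503 — 2 statements merged into one kernel-verified Lean document; each statement's English description precedes it below -/
import Mathlib

section
/- Let C be an algebraically closed field complete with respect to a non-archimedean absolute value, and q a power of the characteristic of C (so x ↦ x^q is additive). Let f = Σᵢ fᵢ tⁱ be an element of the Tate algebra C{t} (i.e. |fᵢ| → 0). Then there exists g = Σᵢ gᵢ tⁱ ∈ C{t} such that gᵢ^q − gᵢ = fᵢ for all i, i.e. τ(g) − g = f where τ acts coefficientwise by the q-th power map. -/
open Filter Polynomial

private lemma ultra_eq {C : Type*} [Field C] (v : AbsoluteValue C ℝ)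
    (hna : ∀ x y : C, v (x + y) ≤ max (v x) (v y))
    {x y : C} (h : v x < v y) : v (x + y) = v y := by
  refine le_antisymm ((hna x y).trans (le_of_eq (max_eq_right h.le))) ?_
  by_contra hlt
  push_neg at hlt
  have h2 : v y ≤ max (v (x + y)) (v x) := by
    have := hna (x + y) (-x)
    simpa [v.map_neg] using this
  rcases max_cases (v (x + y)) (v x) with ⟨he, _⟩ | ⟨he, _⟩ <;> rw [he] at h2 <;> linarith

private lemma key_lemma {C : Type*} [Field C] [IsAlgClosed C]
    (v : AbsoluteValue C ℝ)
    (hna : ∀ x y : C, v (x + y) ≤ max (v x) (v y))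
    {q : ℕ} (hq2 : 2 ≤ q) (c : C) :
    ∃ g : C, g ^ q - g = c ∧ (v c < 1 → v g ≤ v c) := by
  set P : C[X] := X ^ q - (X + Polynomial.C c) with hP
  have hdeg : (X + Polynomial.C c : C[X]).degree < ((q : ℕ) : WithBot ℕ) := by
    refine lt_of_le_of_lt (degree_add_le _ _) (max_lt ?_ ?_)
    · rw [degree_X]
      exact_mod_cast (by omega : (1:ℕ) < q)
    · exact lt_of_le_of_lt degree_C_le (by exact_mod_cast (by omega : (0:ℕ) < q))
  have hmonic : P.Monic := monic_X_pow_sub hdeg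
  have hPne : P ≠ 0 := hmonic.ne_zero
  have hsplits : P.Splits := IsAlgClosed.splits P
  have hroot_eq : ∀ r ∈ P.roots, r ^ q - r = c := by
    intro r hr
    have h0 : P.eval r = 0 := (mem_roots hPne).mp hr
    simp only [hP, eval_sub, eval_add, eval_pow, eval_X, eval_C] at h0
    linear_combination h0
  -- every root has v r ≤ 1
  have hroot_le : ∀ r ∈ P.roots, v c < 1 → v r ≤ 1 := by
    intro r hr hc
    by_contra hlt
    push_neg at hlt
    have hq' : v r < v (r ^ q) := by
      rw [v.map_pow]
      calc v r = v r ^ 1 := (pow_one _).symm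
        _ < v r ^ q := pow_lt_pow_right₀ hlt (by omega)
    have : v (r ^ q - r) = v (r ^ q) := by
      have := ultra_eq v hna (x := -r) (y := r ^ q) (by simpa [v.map_neg] using hq')
      simpa [neg_add_eq_sub] using this
    rw [hroot_eq r hr] at this
    have h1 : (1:ℝ) < v (r ^ q) := by
      rw [v.map_pow]
      calc (1:ℝ) = 1 ^ q := (one_pow q).symm
        _ < v r ^ q := by
          apply pow_lt_pow_left₀ hlt zero_le_one (by omega)
    linarith [this ▸ hc]
  -- product of roots
  have hprodeq : (P.roots.map v).prod = v c := by
    have hfac : P = (P.roots.map fun a => X - Polynomial.C a).prod :=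
      hsplits.eq_prod_roots_of_monic hmonic
    have hev : P.eval 0 = -c := by
      simp [hP, zero_pow (by omega : q ≠ 0)]
    rw [hfac] at hev
    rw [eval_multiset_prod, Multiset.map_map] at hev
    have h2 : (P.roots.map fun a => -a).prod = -c := by
      simpa [Function.comp] using hev
    have h3 : v ((P.roots.map fun a => -a).prod) = v c := by rw [h2, v.map_neg]
    rw [map_multiset_prod, Multiset.map_map] at h3
    rw [← h3]
    congr 1
    simp [Function.comp, v.map_neg]
  -- if v c < 1, some root has v r < 1
  by_cases hc : v c < 1
  · have hexists : ∃ r ∈ P.roots, v r < 1 := by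
      by_contra hall
      push_neg at hall
      have : (1:ℝ) ≤ (P.roots.map v).prod := by
        apply Multiset.one_le_prod
        intro x hx
        rcases Multiset.mem_map.mp hx with ⟨r, hr, rfl⟩
        exact hall r hr
      linarith [hprodeq ▸ this]
    obtain ⟨r, hr, hrlt⟩ := hexists
    refine ⟨r, hroot_eq r hr, fun _ => ?_⟩
    -- v r = v c via r * (r^(q-1) - 1) = c
    have hfac2 : r * (r ^ (q - 1) - 1) = c := by
      have := hroot_eq r hr
      have hqq : q = (q - 1) + 1 := by omega
      rw [hqq] at this
      linear_combination this
    have hone : v (r ^ (q - 1) - 1) = 1 := by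
      have hlt : v (r ^ (q - 1)) < v (1 : C) := by
        rw [v.map_one, v.map_pow]
        calc v r ^ (q - 1) ≤ v r ^ 1 := by
              apply pow_le_pow_of_le_one (v.nonneg r) hrlt.le (by omega)
          _ = v r := pow_one _
          _ < 1 := hrlt
      have := ultra_eq v hna (x := r ^ (q - 1)) (y := (-1 : C))
        (by simpa [v.map_neg] using hlt)
      simpa [v.map_neg, sub_eq_add_neg] using this
    refine le_of_eq ?_
    calc v r = v r * v (r ^ (q - 1) - 1) := by rw [hone, mul_one]
      _ = v (r * (r ^ (q - 1) - 1)) := (v.map_mul _ _).symm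
      _ = v c := by rw [hfac2]
  · -- just need any root
    have hdegP : P.degree = (q : WithBot ℕ) := by
      rw [hP, degree_sub_eq_left_of_degree_lt (by rwa [degree_X_pow]), degree_X_pow]
    obtain ⟨r, hr⟩ := IsAlgClosed.exists_root P (by rw [hdegP]; exact_mod_cast (by omega : q ≠ 0))
    have hr' : r ∈ P.roots := (mem_roots hPne).mpr hr
    exact ⟨r, hroot_eq r hr', fun h => absurd h hc⟩

/-- Let `C` be an algebraically closed field with a non-archimedean absolute
value, of characteristic `p`, and `q = pⁿ` a power of `p`.  For every element
`f = Σ fᵢ tⁱ` of the Tate algebra `C{t}` (i.e. `|fᵢ| → 0`) there is `g = Σ gᵢ tⁱ ∈ C{t}`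
with `gᵢ^q − gᵢ = fᵢ` for all `i`, i.e. `τ(g) − g = f` coefficientwise. -/
theorem artinSchreier_solvable_in_tateAlgebra
    (C : Type*) [Field C] [IsAlgClosed C]
    (v : AbsoluteValue C ℝ)
    (hna : ∀ x y : C, v (x + y) ≤ max (v x) (v y))
    (p : ℕ) [Fact p.Prime] [CharP C p]
    (n q : ℕ) (hn : 1 ≤ n) (hq : q = p ^ n)
    (f : ℕ → C) (hf : Tendsto (fun i => v (f i)) atTop (nhds 0)) :
    ∃ g : ℕ → C, Tendsto (fun i => v (g i)) atTop (nhds 0) ∧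
      ∀ i, g i ^ q - g i = f i := by
  have hq2 : 2 ≤ q := by
    rw [hq]
    calc 2 = 2 ^ 1 := (pow_one 2).symm
      _ ≤ p ^ 1 := Nat.pow_le_pow_left (Fact.out : p.Prime).two_le 1
      _ ≤ p ^ n := Nat.pow_le_pow_right (by linarith [(Fact.out : p.Prime).two_le]) hn
  choose g hg1 hg2 using fun i => key_lemma v hna hq2 (f i)
  refine ⟨g, ?_, hg1⟩
  have hev : ∀ᶠ i in atTop, v (f i) < 1 := hf.eventually_lt_const one_pos
  apply squeeze_zero' (Eventually.of_forall fun i => v.nonneg _) ?_ hf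
  filter_upwards [hev] with i hi
  exact hg2 i hi
end

section
/- Let C be a complete algebraically closed non-archimedean field of characteristic p, q a power of p, and consider the 'trivial' module C{t} over itself with the semilinear operator τ (coefficientwise q-power map). Then every extension of (C{t}, τ) by (C{t}, τ) in the category of C{t}-modules with τ-semilinear endomorphism splits: concretely, for every f ∈ C{t} there exists g ∈ C{t} with f = τ(g) − g, and consequently any rank-2 module D = C{t}e₁ ⊕ C{t}e₂ with τe₁ = e₁, τe₂ = e₂ + f e₁ admits a τ-invariant element of the form e₂ + g e₁. -/
open Filter PowerSeries
open Polynomial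

lemma multiset_norm_prod {C : Type*} [NormedField C] (m : Multiset C) :
    ‖m.prod‖ = (m.map fun x => ‖x‖).prod := by
  induction m using Multiset.induction with
  | empty => simp
  | cons a s ih => simp [norm_mul, ih]

lemma multiset_one_le_prod (m : Multiset ℝ) (h : ∀ x ∈ m, 1 ≤ x) : 1 ≤ m.prod := by
  induction m using Multiset.induction with
  | empty => simp
  | cons a s ih =>
    rw [Multiset.prod_cons]
    have h1 := h a (Multiset.mem_cons_self a s)
    have h2 := ih fun x hx => h x (Multiset.mem_cons_of_mem hx)
    nlinarith

lemma ult_add_eq {C : Type*} [NontriviallyNormedField C]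
    (hna : ∀ x y : C, ‖x + y‖ ≤ max ‖x‖ ‖y‖) {x y : C} (h : ‖x‖ < ‖y‖) :
    ‖x + y‖ = ‖y‖ := by
  refine le_antisymm ((hna x y).trans (by simp [h.le])) ?_
  have h2 : ‖y‖ ≤ max ‖x + y‖ ‖x‖ := by
    have := hna (x + y) (-x)
    simpa using this
  rcases max_cases ‖x + y‖ ‖x‖ with ⟨he, _⟩ | ⟨he, _⟩
  · rw [he] at h2; exact h2
  · rw [he] at h2; exact absurd h2 (not_le.2 h)

lemma exists_small_root {C : Type*} [NontriviallyNormedField C] [IsAlgClosed C]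
    (hna : ∀ x y : C, ‖x + y‖ ≤ max ‖x‖ ‖y‖) {q : ℕ} (hq : 2 ≤ q) (a : C) :
    ∃ x : C, x ^ q - x = a ∧ (‖a‖ < 1 → ‖x‖ ≤ ‖a‖) := by
  set P : C[X] := Polynomial.X ^ q - Polynomial.X - Polynomial.C a with hP
  have hPeq : P = Polynomial.X ^ q - (Polynomial.X + Polynomial.C a) := by rw [hP]; ring
  have hdeglt : (Polynomial.X + Polynomial.C a : C[X]).degree < (Polynomial.X ^ q : C[X]).degree := by
    rw [degree_X_pow]
    refine lt_of_le_of_lt (degree_add_le _ _) ?_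
    simp only [degree_X, max_lt_iff]
    exact ⟨by exact_mod_cast lt_of_lt_of_le one_lt_two hq,
      lt_of_le_of_lt degree_C_le (by exact_mod_cast lt_of_lt_of_le zero_lt_two hq)⟩
  have hmo : P.Monic := by
    rw [hPeq]; exact (monic_X_pow q).sub_of_left hdeglt
  have hdeg : P.natDegree = q := by
    rw [hPeq, natDegree_sub_eq_left_of_natDegree_lt, natDegree_X_pow]
    rw [natDegree_X_pow]
    refine lt_of_le_of_lt (natDegree_add_le _ _) ?_
    simp only [natDegree_X, natDegree_C, max_eq_left (Nat.zero_le 1)]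
    omega
  have hsplits : P.Splits := IsAlgClosed.splits P
  have hroot : ∀ r ∈ P.roots, r ^ q - r = a := by
    intro r hr
    have h := isRoot_of_mem_roots hr
    simp only [hP, IsRoot, eval_sub, eval_pow, eval_X, eval_C] at h
    linear_combination h
  by_cases ha : ‖a‖ < 1
  · have hq0 : (0 : ℕ) ≠ q := by omega
    have hcoeff0 : P.coeff 0 = -a := by
      simp [hP, Polynomial.coeff_X_pow, if_neg hq0]
    have hprod := hsplits.coeff_zero_eq_prod_roots_of_monic hmo
    rw [hcoeff0, hdeg] at hprod
    have hnormprod : (P.roots.map fun r => ‖r‖).prod = ‖a‖ := by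
      rw [← multiset_norm_prod]
      have := congrArg norm hprod
      simp only [norm_neg, norm_mul, norm_pow, norm_neg, norm_one, one_pow, one_mul] at this
      exact this.symm
    have hex : ∃ r ∈ P.roots, ‖r‖ < 1 := by
      by_contra hc
      push_neg at hc
      have h1 : (1 : ℝ) ≤ (P.roots.map fun r => ‖r‖).prod := by
        apply multiset_one_le_prod
        intro x hx
        obtain ⟨r, hr, rfl⟩ := Multiset.mem_map.1 hx
        exact hc r hr
      rw [hnormprod] at h1
      linarith
    obtain ⟨r, hr, hrn⟩ := hex
    refine ⟨r, hroot r hr, fun _ => ?_⟩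
    have heq : r ^ q - r = a := hroot r hr
    by_cases hr0 : r = 0
    · have : a = 0 := by rw [← heq, hr0, zero_pow (by omega : q ≠ 0), sub_zero]
      simp [hr0, this]
    · have h1 : ‖r ^ q‖ < ‖-r‖ := by
        rw [norm_pow, norm_neg]
        calc ‖r‖ ^ q ≤ ‖r‖ ^ 2 := pow_le_pow_of_le_one (norm_nonneg r) hrn.le hq
        _ < ‖r‖ := by nlinarith [norm_pos_iff.2 hr0]
      have h2 : ‖r ^ q + -r‖ = ‖-r‖ := ult_add_eq hna h1
      rw [← sub_eq_add_neg, heq, norm_neg] at h2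
      exact le_of_eq h2.symm
  · have hne : P.natDegree ≠ 0 := by omega
    have hdeg' : P.degree = (q : ℕ) := by rw [degree_eq_natDegree hmo.ne_zero, hdeg]
    obtain ⟨r, hr⟩ := IsAlgClosed.exists_root P
      (by rw [hdeg']; exact_mod_cast (by omega : q ≠ 0))
    have hrm : r ∈ P.roots := mem_roots'.2 ⟨hmo.ne_zero, hr⟩
    exact ⟨r, hroot r hrm, fun h => absurd h ha⟩

lemma split_aux
    (C : Type*) [NontriviallyNormedField C] [IsAlgClosed C]
    (hna : ∀ x y : C, ‖x + y‖ ≤ max ‖x‖ ‖y‖)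
    {q : ℕ} (hq : 2 ≤ q)
    (frob : C →+* C) (hfrob : ∀ x : C, frob x = x ^ q)
    (f : PowerSeries C)
    (hf : Tendsto (fun i : ℕ => ‖coeff i f‖) atTop (nhds 0)) :
    ∃ g : PowerSeries C,
        Tendsto (fun i : ℕ => ‖coeff i g‖) atTop (nhds 0) ∧
        f = PowerSeries.map frob g - g := by
  choose x hx1 hx2 using fun a : C => exists_small_root hna hq a
  refine ⟨PowerSeries.mk fun i => x (coeff i f), ?_, ?_⟩
  · apply squeeze_zero' (f := fun i => ‖coeff i (PowerSeries.mk fun i => x (coeff i f))‖)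
      (g := fun i => ‖coeff i f‖)
    · exact Eventually.of_forall fun i => norm_nonneg _
    · filter_upwards [hf.eventually (eventually_lt_nhds (by norm_num : (0:ℝ) < 1))] with i hi
      simpa using hx2 (coeff i f) (by simpa using hi)
    · exact hf
  · ext i
    simp only [map_sub, PowerSeries.coeff_map, coeff_mk, hfrob]
    linear_combination (hx1 (coeff i f)).symm

/-- Let `C` be a complete algebraically closed non-archimedean field of
characteristic `p` and `q` a power of `p`.  For every `f` in the Tate algebra `C{t}`
there is `g ∈ C{t}` with `f = τ(g) − g` (where `τ` is the coefficientwise `q`-power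
map).  Consequently, the rank-2 module `D = C{t}e₁ ⊕ C{t}e₂` with `τe₁ = e₁`,
`τe₂ = e₂ + f e₁` admits a `τ`-invariant element of the form `e₂ + g' e₁`:
every self-extension of the trivial module `(C{t}, τ)` splits. -/
theorem trivial_tate_extension_splits
    (C : Type*) [NontriviallyNormedField C] [CompleteSpace C] [IsAlgClosed C]
    (hna : ∀ x y : C, ‖x + y‖ ≤ max ‖x‖ ‖y‖)
    (p : ℕ) [Fact p.Prime] [CharP C p]
    (n q : ℕ) (hn : 1 ≤ n) (hq : q = p ^ n)
    (frob : C →+* C) (hfrob : ∀ x : C, frob x = x ^ q)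
    (f : PowerSeries C)
    (hf : Tendsto (fun i : ℕ => ‖coeff i f‖) atTop (nhds 0)) :
    (∃ g : PowerSeries C,
        Tendsto (fun i : ℕ => ‖coeff i g‖) atTop (nhds 0) ∧
        f = PowerSeries.map frob g - g) ∧
    (∃ g' : PowerSeries C,
        Tendsto (fun i : ℕ => ‖coeff i g'‖) atTop (nhds 0) ∧
        -- `τ_D (a, b) = (τa + f·τb, τb)` fixes `(g', 1)`, i.e. `e₂ + g' e₁` is invariant
        (PowerSeries.map frob g' + f * PowerSeries.map frob 1,
          PowerSeries.map frob (1 : PowerSeries C)) = (g', (1 : PowerSeries C))) := by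
  have hq2 : 2 ≤ q := by
    rw [hq]
    have hp2 : 2 ≤ p := (Fact.out : p.Prime).two_le
    calc 2 ≤ p := hp2
    _ = p ^ 1 := (pow_one p).symm
    _ ≤ p ^ n := Nat.pow_le_pow_right (by omega) hn
  constructor
  · exact split_aux C hna hq2 frob hfrob f hf
  · have hnf : Tendsto (fun i : ℕ => ‖coeff i (-f)‖) atTop (nhds 0) := by
      simpa using hf
    obtain ⟨g', hg'1, hg'2⟩ := split_aux C hna hq2 frob hfrob (-f) hnf
    refine ⟨g', hg'1, ?_⟩
    have h1 : PowerSeries.map frob (1 : PowerSeries C) = 1 := map_one _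
    rw [Prod.ext_iff]
    constructor
    · rw [h1, mul_one]
      have : f = g' - PowerSeries.map frob g' := by
        have := hg'2
        linear_combination -this
      rw [this]; ring
    · exact h1
end
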